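/- arXiv:1111.5840 — 2 statements merged into one kernel-verified Lean document; each statement's English description precedes it below -/
import Mathlib

section
/- Let X be a Banach space that is the completion of the union of a transfinite continuous chain (X_α)_{α<ρ} with X₀ separable, where each X_{α+1} arises from X_α by a pushout along an isometric embedding of a finite-dimensional space E_α ⊆ F_α into X_α. If C ⊆ X₀ is a closed subspace isometric to c₀, and P₀ : X₀ → C is a bounded projection (which exists with ‖P₀‖ ≤ 2 by Sobczyk's theorem), then P₀ extends to a bounded projection P : X → C with ‖P‖ = ‖P₀‖. In particular, every copy of c₀ contained in X₀ is complemented in X. -/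
universe u

open Ordinal Filter Topology

noncomputable section SobczykAuxiliary

attribute [local instance] Classical.propDecidable

/-! ### Auxiliary results: `c₀` is `1`-injective for finite-dimensional domains -/

/-- On a finite-dimensional space, pointwise convergence to `0` of a sequence of functionals
implies convergence in operator norm. -/
lemma sob_tendsto_opNorm_zero_of_pointwise {E : Type*} [NormedAddCommGroup E] [NormedSpace ℝ E]
    [FiniteDimensional ℝ E] (f : ℕ → E →L[ℝ] ℝ)
    (h : ∀ x : E, Tendsto (fun n => f n x) atTop (𝓝 0)) :
    Tendsto (fun n => ‖f n‖) atTop (𝓝 0) := by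
  classical
  set d := Module.finrank ℝ E
  let b : Module.Basis (Fin d) ℝ E := Module.finBasis ℝ E
  let c : Fin d → (E →L[ℝ] ℝ) := fun i => LinearMap.toContinuousLinearMap (b.coord i)
  have hbound : ∀ n, ‖f n‖ ≤ ∑ i, ‖c i‖ * ‖f n (b i)‖ := by
    intro n
    refine ContinuousLinearMap.opNorm_le_bound _ (Finset.sum_nonneg fun i _ =>
      mul_nonneg (norm_nonneg _) (norm_nonneg _)) (fun x => ?_)
    have hx : x = ∑ i, b.repr x i • b i := (b.sum_repr x).symm
    calc ‖f n x‖ = ‖∑ i, b.repr x i * f n (b i)‖ := by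
          conv_lhs => rw [hx]
          rw [map_sum]
          simp [_root_.smul_eq_mul]
      _ ≤ ∑ i, ‖b.repr x i * f n (b i)‖ := norm_sum_le _ _
      _ ≤ ∑ i, ‖c i‖ * ‖f n (b i)‖ * ‖x‖ := by
          refine Finset.sum_le_sum fun i _ => ?_
          rw [norm_mul]
          have : ‖b.repr x i‖ ≤ ‖c i‖ * ‖x‖ := (c i).le_opNorm x
          calc ‖b.repr x i‖ * ‖f n (b i)‖ ≤ (‖c i‖ * ‖x‖) * ‖f n (b i)‖ :=
                mul_le_mul_of_nonneg_right this (norm_nonneg _)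
            _ = ‖c i‖ * ‖f n (b i)‖ * ‖x‖ := by ring
      _ = (∑ i, ‖c i‖ * ‖f n (b i)‖) * ‖x‖ := (Finset.sum_mul ..).symm
  have hsum : Tendsto (fun n => ∑ i, ‖c i‖ * ‖f n (b i)‖) atTop (𝓝 0) := by
    have : Tendsto (fun n => ∑ i, ‖c i‖ * ‖f n (b i)‖) atTop
        (𝓝 (∑ i : Fin d, ‖c i‖ * ‖(0:ℝ)‖)) := by
      refine tendsto_finset_sum _ fun i _ => ?_
      exact ((h (b i)).norm).const_mul _
    simpa using this
  exact squeeze_zero (fun n => norm_nonneg _) hbound hsum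

/-- Evaluation at a point as a continuous linear map on `C₀(ℕ, ℝ)`. -/
def sobC0eval (n : ℕ) : ZeroAtInftyContinuousMap ℕ ℝ →L[ℝ] ℝ :=
  LinearMap.mkContinuous
    { toFun := fun g => g n
      map_add' := fun g₁ g₂ => rfl
      map_smul' := fun r g => rfl } 1
    (fun g => by
      rw [one_mul]
      have := BoundedContinuousFunction.norm_coe_le_norm g.toBCF n
      simpa [ZeroAtInftyContinuousMap.norm_toBCF_eq_norm] using this)

lemma sobC0eval_norm_le (n : ℕ) : ‖sobC0eval n‖ ≤ 1 :=
  LinearMap.mkContinuous_norm_le _ zero_le_one _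

/-- `c₀` is `1`-injective for operators defined on subspaces of finite-dimensional spaces. -/
lemma sob_exists_c0_extension {F : Type*} [NormedAddCommGroup F] [NormedSpace ℝ F]
    [FiniteDimensional ℝ F] (p : Subspace ℝ F)
    (T : p →L[ℝ] ZeroAtInftyContinuousMap ℕ ℝ) :
    ∃ S : F →L[ℝ] ZeroAtInftyContinuousMap ℕ ℝ,
      (∀ x : p, S x = T x) ∧ ‖S‖ ≤ ‖T‖ := by
  classical
  set f : ℕ → (p →L[ℝ] ℝ) := fun n => (sobC0eval n).comp T with hf
  have hfnorm : ∀ n, ‖f n‖ ≤ ‖T‖ := fun n => by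
    calc ‖(sobC0eval n).comp T‖ ≤ ‖sobC0eval n‖ * ‖T‖ := ContinuousLinearMap.opNorm_comp_le _ _
      _ ≤ 1 * ‖T‖ :=
        mul_le_mul_of_nonneg_right (sobC0eval_norm_le n) (ContinuousLinearMap.opNorm_nonneg T)
      _ = ‖T‖ := one_mul _
  have hpt : ∀ x : p, Tendsto (fun n => f n x) atTop (𝓝 0) := by
    intro x
    have := (T x).zero_at_infty'
    rwa [cocompact_eq_cofinite, Nat.cofinite_eq_atTop] at this
  have hnorm0 : Tendsto (fun n => ‖f n‖) atTop (𝓝 0) :=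
    sob_tendsto_opNorm_zero_of_pointwise f hpt
  choose g hg hgnorm using fun n => exists_extension_norm_eq p (f n)
  have hgn0 : Tendsto (fun n => ‖g n‖) atTop (𝓝 0) := by
    simpa only [hgnorm] using hnorm0
  have hgle : ∀ n, ‖g n‖ ≤ ‖T‖ := fun n => (hgnorm n).le.trans (hfnorm n)
  have hzero : ∀ x : F, Tendsto (fun n => g n x) (Filter.cocompact ℕ) (𝓝 0) := by
    intro x
    rw [cocompact_eq_cofinite, Nat.cofinite_eq_atTop]
    refine squeeze_zero_norm (fun n => (g n).le_opNorm x) ?_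
    simpa using hgn0.mul_const ‖x‖
  set Sfun : F → ZeroAtInftyContinuousMap ℕ ℝ := fun x =>
    { toFun := fun n => g n x
      continuous_toFun := continuous_of_discreteTopology
      zero_at_infty' := hzero x } with hSfun
  have happ : ∀ x n, Sfun x n = g n x := fun _ _ => rfl
  have hSnorm : ∀ x : F, ‖Sfun x‖ ≤ ‖T‖ * ‖x‖ := by
    intro x
    rw [← ZeroAtInftyContinuousMap.norm_toBCF_eq_norm]
    refine BoundedContinuousFunction.norm_le
      (mul_nonneg (ContinuousLinearMap.opNorm_nonneg T) (norm_nonneg x)) |>.mpr (fun n => ?_)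
    calc ‖g n x‖ ≤ ‖g n‖ * ‖x‖ := (g n).le_opNorm x
      _ ≤ ‖T‖ * ‖x‖ := mul_le_mul_of_nonneg_right (hgle n) (norm_nonneg _)
  set S : F →L[ℝ] ZeroAtInftyContinuousMap ℕ ℝ :=
    LinearMap.mkContinuous
      { toFun := Sfun
        map_add' := fun x y => by ext n; simp [happ, map_add]
        map_smul' := fun r x => by ext n; simp [happ, map_smul] }
      ‖T‖ hSnorm with hS
  refine ⟨S, fun x => ?_,
    LinearMap.mkContinuous_norm_le _ (ContinuousLinearMap.opNorm_nonneg T) _⟩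
  ext n
  have : S x n = g n x := rfl
  rw [this, hg n x]
  rfl

/-- `1`-injectivity (for finite-dimensional domains) of any space isometric to `c₀`. -/
lemma sob_exists_isoc0_extension {F : Type*} [NormedAddCommGroup F] [NormedSpace ℝ F]
    [FiniteDimensional ℝ F] {W : Type*} [NormedAddCommGroup W] [NormedSpace ℝ W]
    (Φ : W ≃ₗᵢ[ℝ] ZeroAtInftyContinuousMap ℕ ℝ) (p : Subspace ℝ F)
    (T : p →L[ℝ] W) :
    ∃ S : F →L[ℝ] W, (∀ x : p, S x = T x) ∧ ‖S‖ ≤ ‖T‖ := by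
  set T' : p →L[ℝ] ZeroAtInftyContinuousMap ℕ ℝ :=
    (Φ.toLinearIsometry.toContinuousLinearMap).comp T with hT'
  have hT'apply : ∀ x : p, T' x = Φ (T x) := fun x => rfl
  have hT'norm : ‖T'‖ ≤ ‖T‖ := by
    refine ContinuousLinearMap.opNorm_le_bound _ (ContinuousLinearMap.opNorm_nonneg T)
      (fun x => ?_)
    rw [hT'apply, Φ.norm_map]
    exact T.le_opNorm x
  obtain ⟨S', hS'ext, hS'norm⟩ := sob_exists_c0_extension p T'
  set S : F →L[ℝ] W := (Φ.symm.toLinearIsometry.toContinuousLinearMap).comp S' with hS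
  have hSapply : ∀ x : F, S x = Φ.symm (S' x) := fun x => rfl
  refine ⟨S, fun x => ?_, ?_⟩
  · rw [hSapply, hS'ext x, hT'apply, Φ.symm_apply_apply]
  · refine ContinuousLinearMap.opNorm_le_bound _ (ContinuousLinearMap.opNorm_nonneg T)
      (fun x => ?_)
    rw [hSapply, Φ.symm.norm_map]
    calc ‖S' x‖ ≤ ‖S'‖ * ‖x‖ := S'.le_opNorm x
      _ ≤ ‖T‖ * ‖x‖ :=
        mul_le_mul_of_nonneg_right (hS'norm.trans hT'norm) (norm_nonneg _)

/-! ### Auxiliary results: gluing and extending operators along chains -/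

variable {X : Type u} [NormedAddCommGroup X] [NormedSpace ℝ X]

/-- Inclusion of nested submodules as a continuous linear map. -/
def sobInclCLM {S S' : Subspace ℝ X} (h : S ≤ S') : S →L[ℝ] S' :=
  LinearMap.mkContinuous (Submodule.inclusion h) 1
    (fun x => by rw [one_mul]; rfl)

/-- Gluing a coherent family of operators along a directed chain of subspaces. -/
lemma sob_glue_core (Xs : Ordinal.{0} → Subspace ℝ X) {C : Subspace ℝ X}
    (hmono : ∀ α β : Ordinal, α ≤ β → Xs α ≤ Xs β)
    (δ : Ordinal.{0}) (hδ0 : 0 < δ)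
    (T : ∀ β, β < δ → (Xs β →L[ℝ] C))
    (hcoh : ∀ β γ (hβγ : β ≤ γ) (hγ : γ < δ) (x : X) (hxβ : x ∈ Xs β) (hxγ : x ∈ Xs γ),
      T γ hγ ⟨x, hxγ⟩ = T β (lt_of_le_of_lt hβγ hγ) ⟨x, hxβ⟩)
    (M : ℝ) (hbd : ∀ β (hβ : β < δ), ‖T β hβ‖ ≤ M) (hM : 0 ≤ M) :
    ∃ g : ↥(⨆ β ∈ Set.Iio δ, Xs β) →L[ℝ] C,
      (∀ β (hβ : β < δ) (x : X) (hxβ : x ∈ Xs β) (hxU : x ∈ ⨆ β ∈ Set.Iio δ, Xs β),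
        g ⟨x, hxU⟩ = T β hβ ⟨x, hxβ⟩) ∧ ‖g‖ ≤ M := by
  classical
  set U : Subspace ℝ X := ⨆ β ∈ Set.Iio δ, Xs β with hU
  haveI : Nonempty (Set.Iio δ) := ⟨⟨0, hδ0⟩⟩
  have hdir : Directed (· ≤ ·) (fun β : Set.Iio δ => Xs β) := by
    intro a b
    exact ⟨⟨max a.1 b.1, Set.mem_Iio.mpr (max_lt a.2 b.2)⟩,
      hmono _ _ (le_max_left _ _), hmono _ _ (le_max_right _ _)⟩
  have hmem : ∀ x : X, x ∈ U ↔ ∃ β, β < δ ∧ x ∈ Xs β := by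
    intro x
    rw [hU, iSup_subtype', Submodule.mem_iSup_of_directed _ hdir]
    constructor
    · rintro ⟨⟨β, hβ⟩, hx⟩; exact ⟨β, hβ, hx⟩
    · rintro ⟨β, hβ, hx⟩; exact ⟨⟨β, hβ⟩, hx⟩
  set val : U → C := fun u =>
    T ((hmem u).mp u.2).choose ((hmem u).mp u.2).choose_spec.1
      ⟨u, ((hmem u).mp u.2).choose_spec.2⟩ with hval
  have hval_eq : ∀ (u : U) (β) (hβ : β < δ) (hx : (u : X) ∈ Xs β),
      val u = T β hβ ⟨u, hx⟩ := by
    intro u β hβ hx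
    have hγ : ((hmem u).mp u.2).choose < δ := ((hmem u).mp u.2).choose_spec.1
    have hxγ : (u : X) ∈ Xs ((hmem u).mp u.2).choose := ((hmem u).mp u.2).choose_spec.2
    have hμ : max β ((hmem u).mp u.2).choose < δ := max_lt hβ hγ
    have hxμ : (u : X) ∈ Xs (max β ((hmem u).mp u.2).choose) :=
      hmono _ _ (le_max_right _ _) hxγ
    have h1 := hcoh _ _ (le_max_right β _) hμ u hxγ hxμ
    have h2 := hcoh β _ (le_max_left β _) hμ u hx hxμ
    exact h1.symm.trans h2
  have hadd : ∀ u v : U, val (u + v) = val u + val v := by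
    intro u v
    obtain ⟨βu, hβu, hu⟩ := (hmem u).mp u.2
    obtain ⟨βv, hβv, hv⟩ := (hmem v).mp v.2
    have hμ : max βu βv < δ := max_lt hβu hβv
    have hu' : (u : X) ∈ Xs (max βu βv) := hmono _ _ (le_max_left _ _) hu
    have hv' : (v : X) ∈ Xs (max βu βv) := hmono _ _ (le_max_right _ _) hv
    have huv : ((u + v : U) : X) ∈ Xs (max βu βv) := (Xs _).add_mem hu' hv'
    rw [hval_eq (u+v) _ hμ huv, hval_eq u _ hμ hu', hval_eq v _ hμ hv']
    have : (⟨((u + v : U) : X), huv⟩ : Xs (max βu βv)) = ⟨u, hu'⟩ + ⟨v, hv'⟩ := by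
      ext; rfl
    rw [this, map_add]
  have hsmul : ∀ (r : ℝ) (u : U), val (r • u) = r • val u := by
    intro r u
    obtain ⟨βu, hβu, hu⟩ := (hmem u).mp u.2
    have hru : ((r • u : U) : X) ∈ Xs βu := (Xs βu).smul_mem r hu
    rw [hval_eq (r • u) _ hβu hru, hval_eq u _ hβu hu]
    have : (⟨((r • u : U) : X), hru⟩ : Xs βu) = r • ⟨u, hu⟩ := by ext; rfl
    rw [this, map_smul]
  have hbound : ∀ u : U, ‖val u‖ ≤ M * ‖u‖ := by
    intro u
    obtain ⟨βu, hβu, hu⟩ := (hmem u).mp u.2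
    rw [hval_eq u _ hβu hu]
    calc ‖T βu hβu ⟨u, hu⟩‖ ≤ ‖T βu hβu‖ * ‖(⟨u, hu⟩ : Xs βu)‖ :=
          (T βu hβu).le_opNorm _
      _ ≤ M * ‖u‖ := mul_le_mul (hbd βu hβu) (le_of_eq rfl) (norm_nonneg _) hM
  refine ⟨LinearMap.mkContinuous ⟨⟨val, hadd⟩, hsmul⟩ M hbound, ?_, ?_⟩
  · intro β hβ x hxβ hxU
    exact hval_eq ⟨x, hxU⟩ β hβ hxβ
  · exact LinearMap.mkContinuous_norm_le _ hM _

/-- Extending an operator to the topological closure of a submodule. -/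
lemma sob_extend_closure {C : Subspace ℝ X} [CompleteSpace C] {U V : Subspace ℝ X}
    (hV : V = U.topologicalClosure)
    (g : U →L[ℝ] C) (M : ℝ) (hg : ‖g‖ ≤ M) :
    ∃ h : V →L[ℝ] C,
      (∀ (x : X) (hxU : x ∈ U) (hxV : x ∈ V), h ⟨x, hxV⟩ = g ⟨x, hxU⟩) ∧ ‖h‖ ≤ M := by
  have hle : U ≤ V := hV ▸ Submodule.le_topologicalClosure U
  set j : U →L[ℝ] V := sobInclCLM hle with hj
  have hiso : Isometry j := Isometry.of_dist_eq fun a b => rfl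
  have hdense : DenseRange j := by
    rintro ⟨yx, hyV⟩
    rw [Metric.mem_closure_iff]
    intro ε hε
    have hy : yx ∈ closure (U : Set X) := by
      rw [hV] at hyV
      rwa [← Submodule.topologicalClosure_coe]
    rw [Metric.mem_closure_iff] at hy
    obtain ⟨z, hz, hdz⟩ := hy ε hε
    exact ⟨j ⟨z, hz⟩, Set.mem_range_self _, by rwa [Subtype.dist_eq]⟩
  have hbnd : ∀ x : U, ‖x‖ ≤ ((1 : NNReal) : ℝ) * ‖j x‖ := fun x => by
    rw [NNReal.coe_one, one_mul]; rfl
  refine ⟨g.extend j, ?_, ?_⟩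
  · intro x hxU hxV
    exact ContinuousLinearMap.extend_eq g hdense hiso.isUniformInducing ⟨x, hxU⟩
  · have := ContinuousLinearMap.opNorm_extend_le g hdense hbnd
    calc ‖g.extend j‖ ≤ ((1:NNReal):ℝ) * ‖g‖ := this
      _ ≤ M := by rw [NNReal.coe_one, one_mul]; exact hg

/-- Extending an operator defined on a dense submodule to the whole space. -/
lemma sob_extend_dense {C : Subspace ℝ X} [CompleteSpace C] {U : Subspace ℝ X}
    (hU : Dense (U : Set X))
    (g : U →L[ℝ] C) (M : ℝ) (hg : ‖g‖ ≤ M) :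
    ∃ h : X →L[ℝ] C,
      (∀ (x : X) (hxU : x ∈ U), h x = g ⟨x, hxU⟩) ∧ ‖h‖ ≤ M := by
  set j : U →L[ℝ] X := U.subtypeL with hj
  have hdense : DenseRange j := by
    have := hU.denseRange_val
    rwa [show ⇑j = (Subtype.val : U → X) from rfl]
  have hiso : Isometry j := isometry_subtype_coe
  have hbnd : ∀ x : U, ‖x‖ ≤ ((1 : NNReal) : ℝ) * ‖j x‖ := fun x => by
    rw [NNReal.coe_one, one_mul]; rfl
  refine ⟨g.extend j, ?_, ?_⟩
  · intro x hxU
    exact ContinuousLinearMap.extend_eq g hdense hiso.isUniformInducing ⟨x, hxU⟩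
  · have := ContinuousLinearMap.opNorm_extend_le g hdense hbnd
    calc ‖g.extend j‖ ≤ ((1:NNReal):ℝ) * ‖g‖ := this
      _ ≤ M := by rw [NNReal.coe_one, one_mul]; exact hg

end SobczykAuxiliary

noncomputable section SobczykRecursion

attribute [local instance] Classical.propDecidable

open Filter Topology Ordinal

variable {X : Type u} [NormedAddCommGroup X] [NormedSpace ℝ X] [CompleteSpace X]

/-- One successor step of the recursion: extend along the pushout, preserving the norm. -/
lemma sob_succ_ext (ρ : Ordinal.{0}) (Xs : Ordinal.{0} → Subspace ℝ X)
    (hmono : ∀ α β : Ordinal, α ≤ β → Xs α ≤ Xs β)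
    (C : Subspace ℝ X) (hCclosed : IsClosed (C : Set X))
    (Φ : C ≃ₗᵢ[ℝ] ZeroAtInftyContinuousMap ℕ ℝ)
    (hpush : ∀ α : Ordinal, α + 1 < ρ →
      ∃ (Fa : Subspace ℝ X) (_ : FiniteDimensional ℝ Fa)
        (hle : Fa ≤ Xs (α + 1)),
        Xs (α + 1) = Xs α ⊔ Fa ∧
        ∀ (V : Type u) [NormedAddCommGroup V] [NormedSpace ℝ V] [CompleteSpace V],
          ∀ (T : (Xs α) →L[ℝ] V) (S : Fa →L[ℝ] V),
            (∀ (x : X) (hx : x ∈ Xs α) (hx' : x ∈ Fa), T ⟨x, hx⟩ = S ⟨x, hx'⟩) →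
            ∃ h : (Xs (α + 1)) →L[ℝ] V,
              (∀ (x : X) (hx : x ∈ Xs α),
                h ⟨x, hmono α (α + 1) (le_self_add (a := α) (b := 1)) hx⟩ = T ⟨x, hx⟩) ∧
              (∀ (x : X) (hx : x ∈ Fa), h ⟨x, hle hx⟩ = S ⟨x, hx⟩) ∧
              ‖h‖ ≤ max ‖T‖ ‖S‖)
    {β : Ordinal.{0}} (hρ : β + 1 < ρ) (prev : Xs β →L[ℝ] C) :
    ∃ h : Xs (β + 1) →L[ℝ] C,
      (∀ (x : X) (hx : x ∈ Xs β),
        h ⟨x, hmono β (β + 1) (le_self_add (a := β) (b := 1)) hx⟩ = prev ⟨x, hx⟩) ∧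
      ‖h‖ ≤ ‖prev‖ := by
  haveI : CompleteSpace C := hCclosed.completeSpace_coe
  obtain ⟨Fa, hfin, hle, hsup, huniv⟩ := hpush β hρ
  haveI : FiniteDimensional ℝ Fa := hfin
  set p : Subspace ℝ Fa := (Xs β).comap Fa.subtype with hp
  set ip : p →L[ℝ] Xs β :=
    LinearMap.mkContinuous
      { toFun := fun x => (⟨(x : Fa), x.2⟩ : Xs β)
        map_add' := fun x y => rfl
        map_smul' := fun r x => rfl } 1
      (fun x => by rw [one_mul]; rfl) with hip
  set T' : p →L[ℝ] C := prev.comp ip with hT'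
  have hT'norm : ‖T'‖ ≤ ‖prev‖ := by
    refine ContinuousLinearMap.opNorm_le_bound _ (ContinuousLinearMap.opNorm_nonneg prev)
      (fun x => ?_)
    calc ‖prev (ip x)‖ ≤ ‖prev‖ * ‖ip x‖ := prev.le_opNorm _
      _ ≤ ‖prev‖ * ‖x‖ := by
          refine mul_le_mul_of_nonneg_left (le_of_eq rfl) (ContinuousLinearMap.opNorm_nonneg _)
  obtain ⟨S, hSext, hSnorm⟩ := sob_exists_isoc0_extension Φ p T'
  have hagree : ∀ (x : X) (hx : x ∈ Xs β) (hx' : x ∈ Fa),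
      prev ⟨x, hx⟩ = S ⟨x, hx'⟩ := by
    intro x hx hx'
    have hxp : (⟨x, hx'⟩ : Fa) ∈ p := hx
    have := hSext ⟨⟨x, hx'⟩, hxp⟩
    rw [this]
    rfl
  obtain ⟨h, hh1, hh2, hh3⟩ := huniv C prev S hagree
  refine ⟨h, hh1, hh3.trans ?_⟩
  exact max_le le_rfl (hSnorm.trans hT'norm)

variable (ρ : Ordinal.{0}) (Xs : Ordinal.{0} → Subspace ℝ X)
  (hmono : ∀ α β : Ordinal, α ≤ β → Xs α ≤ Xs β)
  (hlim : ∀ α < ρ, Order.IsSuccLimit α → Xs α = (⨆ β ∈ Set.Iio α, Xs β).topologicalClosure)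
  (C : Subspace ℝ X) (hCclosed : IsClosed (C : Set X))
  (Φ : C ≃ₗᵢ[ℝ] ZeroAtInftyContinuousMap ℕ ℝ)
  (P₀ : (Xs 0) →L[ℝ] C)

/-- The step function of the transfinite recursion. -/
def sobStep
    (hpush : ∀ α : Ordinal, α + 1 < ρ →
      ∃ (Fa : Subspace ℝ X) (_ : FiniteDimensional ℝ Fa)
        (hle : Fa ≤ Xs (α + 1)),
        Xs (α + 1) = Xs α ⊔ Fa ∧
        ∀ (V : Type u) [NormedAddCommGroup V] [NormedSpace ℝ V] [CompleteSpace V],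
          ∀ (T : (Xs α) →L[ℝ] V) (S : Fa →L[ℝ] V),
            (∀ (x : X) (hx : x ∈ Xs α) (hx' : x ∈ Fa), T ⟨x, hx⟩ = S ⟨x, hx'⟩) →
            ∃ h : (Xs (α + 1)) →L[ℝ] V,
              (∀ (x : X) (hx : x ∈ Xs α),
                h ⟨x, hmono α (α + 1) (le_self_add (a := α) (b := 1)) hx⟩ = T ⟨x, hx⟩) ∧
              (∀ (x : X) (hx : x ∈ Fa), h ⟨x, hle hx⟩ = S ⟨x, hx⟩) ∧
              ‖h‖ ≤ max ‖T‖ ‖S‖)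
    (α : Ordinal.{0}) (IH : ∀ β, β < α → (Xs β →L[ℝ] C)) : Xs α →L[ℝ] C :=
  haveI : CompleteSpace C := hCclosed.completeSpace_coe
  if h0 : α = 0 then P₀.comp (sobInclCLM (hmono α 0 (le_of_eq h0)))
  else if hs : ∃ β, α = β + 1 then
    if hρα : α < ρ then
      have hβρ : hs.choose + 1 < ρ := hs.choose_spec ▸ hρα
      have hβα : hs.choose < α := by
        refine lt_of_lt_of_le ?_ (le_of_eq hs.choose_spec.symm)
        rw [Ordinal.add_one_eq_succ]; exact Order.lt_succ _
      ((sob_succ_ext ρ Xs hmono C hCclosed Φ hpush hβρ (IH hs.choose hβα)).choose).comp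
        (sobInclCLM (hmono α (hs.choose + 1) (le_of_eq hs.choose_spec)))
    else 0
  else
    if hcond : α < ρ ∧
        (∀ β γ (hβγ : β ≤ γ) (hγ : γ < α) (x : X) (hxβ : x ∈ Xs β) (hxγ : x ∈ Xs γ),
          IH γ hγ ⟨x, hxγ⟩ = IH β (lt_of_le_of_lt hβγ hγ) ⟨x, hxβ⟩) ∧
        (∀ β (hβ : β < α), ‖IH β hβ‖ ≤ ‖P₀‖) then
      have hlimα : Order.IsSuccLimit α := ((Ordinal.zero_or_succ_or_isSuccLimit α).resolve_left h0).resolve_left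
        (by rintro ⟨β, hβ⟩; exact hs ⟨β, by rw [Ordinal.add_one_eq_succ]; exact hβ.symm⟩)
      (sob_extend_closure (hlim α hcond.1 hlimα)
        (sob_glue_core Xs hmono α hlimα.pos (fun β hβ => IH β hβ) hcond.2.1
          ‖P₀‖ hcond.2.2 (ContinuousLinearMap.opNorm_nonneg P₀)).choose
        ‖P₀‖
        (sob_glue_core Xs hmono α hlimα.pos (fun β hβ => IH β hβ) hcond.2.1
          ‖P₀‖ hcond.2.2 (ContinuousLinearMap.opNorm_nonneg P₀)).choose_spec.2).choose
    else 0

variable (hpush : ∀ α : Ordinal, α + 1 < ρ →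
      ∃ (Fa : Subspace ℝ X) (_ : FiniteDimensional ℝ Fa)
        (hle : Fa ≤ Xs (α + 1)),
        Xs (α + 1) = Xs α ⊔ Fa ∧
        ∀ (V : Type u) [NormedAddCommGroup V] [NormedSpace ℝ V] [CompleteSpace V],
          ∀ (T : (Xs α) →L[ℝ] V) (S : Fa →L[ℝ] V),
            (∀ (x : X) (hx : x ∈ Xs α) (hx' : x ∈ Fa), T ⟨x, hx⟩ = S ⟨x, hx'⟩) →
            ∃ h : (Xs (α + 1)) →L[ℝ] V,
              (∀ (x : X) (hx : x ∈ Xs α),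
                h ⟨x, hmono α (α + 1) (le_self_add (a := α) (b := 1)) hx⟩ = T ⟨x, hx⟩) ∧
              (∀ (x : X) (hx : x ∈ Fa), h ⟨x, hle hx⟩ = S ⟨x, hx⟩) ∧
              ‖h‖ ≤ max ‖T‖ ‖S‖)

/-- The coherent family of extensions, built by transfinite recursion. -/
def sobT : ∀ α : Ordinal.{0}, Xs α →L[ℝ] C :=
  WellFounded.fix Ordinal.lt_wf (sobStep ρ Xs hmono hlim C hCclosed Φ P₀ hpush)

lemma sobT_eq (α : Ordinal.{0}) :
    sobT ρ Xs hmono hlim C hCclosed Φ P₀ hpush α =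
      sobStep ρ Xs hmono hlim C hCclosed Φ P₀ hpush α
        (fun β _ => sobT ρ Xs hmono hlim C hCclosed Φ P₀ hpush β) :=
  WellFounded.fix_eq _ _ _

lemma sobT_zero (x : X) (hx : x ∈ Xs 0) :
    sobT ρ Xs hmono hlim C hCclosed Φ P₀ hpush 0 ⟨x, hx⟩ = P₀ ⟨x, hx⟩ := by
  rw [sobT_eq]
  show sobStep ρ Xs hmono hlim C hCclosed Φ P₀ hpush 0 _ ⟨x, hx⟩ = _
  rw [sobStep, dif_pos rfl]
  rfl

lemma sobT_good : ∀ α : Ordinal.{0}, α < ρ →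
    ‖sobT ρ Xs hmono hlim C hCclosed Φ P₀ hpush α‖ ≤ ‖P₀‖ ∧
    (∀ β (hβ : β ≤ α) (x : X) (hxβ : x ∈ Xs β) (hxα : x ∈ Xs α),
      sobT ρ Xs hmono hlim C hCclosed Φ P₀ hpush α ⟨x, hxα⟩ =
        sobT ρ Xs hmono hlim C hCclosed Φ P₀ hpush β ⟨x, hxβ⟩) := by
  haveI : CompleteSpace C := hCclosed.completeSpace_coe
  intro α
  induction α using Ordinal.induction with
  | _ α IH =>
  intro hαρ
  have ltsucc : ∀ o : Ordinal.{0}, o < o + 1 := fun o => by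
    rw [Ordinal.add_one_eq_succ]; exact Order.lt_succ o
  rcases Ordinal.zero_or_succ_or_isSuccLimit α with h0 | ⟨γ, hγ⟩ | hlimα
  · subst h0
    constructor
    · rw [sobT_eq, sobStep, dif_pos rfl]
      refine le_trans (ContinuousLinearMap.opNorm_comp_le _ _) ?_
      refine le_trans (mul_le_mul le_rfl
        (LinearMap.mkContinuous_norm_le _ zero_le_one _) (norm_nonneg _)
        (ContinuousLinearMap.opNorm_nonneg _)) ?_
      rw [mul_one]
    · intro β hβ x hxβ hxα
      have : β = 0 := nonpos_iff_eq_zero.mp hβ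
      subst this
      rfl
  · rw [← Ordinal.add_one_eq_succ] at hγ
    subst hγ
    have h0' : γ + 1 ≠ 0 := by
      rw [Ordinal.add_one_eq_succ]; exact (Order.succ_ne_bot γ)
    have hexα : ∃ β, γ + 1 = β + 1 := ⟨γ, rfl⟩
    have hc1 : γ + 1 = hexα.choose + 1 := hexα.choose_spec
    have hβ'ρ : hexα.choose + 1 < ρ := hc1 ▸ hαρ
    have hβ'α : hexα.choose < γ + 1 :=
      lt_of_lt_of_le (ltsucc _) (le_of_eq hc1.symm)
    have hβ'ρ2 : hexα.choose < ρ := lt_trans hβ'α hαρ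
    have Hs := Exists.choose_spec
      (sob_succ_ext ρ Xs hmono C hCclosed Φ hpush hβ'ρ
        (sobT ρ Xs hmono hlim C hCclosed Φ P₀ hpush hexα.choose))
    have hIH := IH hexα.choose hβ'α hβ'ρ2
    constructor
    · rw [sobT_eq, sobStep, dif_neg h0', dif_pos hexα, dif_pos hαρ]
      refine le_trans (ContinuousLinearMap.opNorm_comp_le _ _) ?_
      refine le_trans (mul_le_mul (le_trans Hs.2 hIH.1)
        (LinearMap.mkContinuous_norm_le _ zero_le_one _) (norm_nonneg _)
        (ContinuousLinearMap.opNorm_nonneg _)) ?_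
      rw [mul_one]
    · intro β hβ x hxβ hxα
      rcases eq_or_lt_of_le hβ with heq | hlt
      · subst heq; rfl
      · have hββ' : β ≤ hexα.choose := by
          have h3 : β < hexα.choose + 1 := hc1 ▸ hlt
          rwa [Ordinal.add_one_eq_succ, Order.lt_succ_iff] at h3
        have hxβ' : x ∈ Xs hexα.choose := hmono β _ hββ' hxβ
        have step1 := Hs.1 x hxβ'
        have step2 := hIH.2 β hββ' x hxβ hxβ'
        rw [sobT_eq]
        show sobStep ρ Xs hmono hlim C hCclosed Φ P₀ hpush (γ+1) _ ⟨x, hxα⟩ = _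
        rw [sobStep, dif_neg h0', dif_pos hexα, dif_pos hαρ]
        exact step1.trans step2
  · have h0' : α ≠ 0 := hlimα.pos.ne'
    have hs' : ¬ ∃ β, α = β + 1 := by
      rintro ⟨β, hβ⟩
      have hβα : β < α := lt_of_lt_of_le (ltsucc _) (le_of_eq hβ.symm)
      have := hlimα.succ_lt hβα
      rw [← Ordinal.add_one_eq_succ, ← hβ] at this
      exact lt_irrefl α this
    have hcoh' : ∀ β γ (hβγ : β ≤ γ) (hγ : γ < α) (x : X) (hxβ : x ∈ Xs β)
        (hxγ : x ∈ Xs γ),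
        sobT ρ Xs hmono hlim C hCclosed Φ P₀ hpush γ ⟨x, hxγ⟩ =
          sobT ρ Xs hmono hlim C hCclosed Φ P₀ hpush β ⟨x, hxβ⟩ := by
      intro β γ hβγ hγ x hxβ hxγ
      exact (IH γ hγ (lt_trans hγ hαρ)).2 β hβγ x hxβ hxγ
    have hbd' : ∀ β (hβ : β < α),
        ‖sobT ρ Xs hmono hlim C hCclosed Φ P₀ hpush β‖ ≤ ‖P₀‖ :=
      fun β hβ => (IH β hβ (lt_trans hβ hαρ)).1
    have hcond : α < ρ ∧
        (∀ β γ (hβγ : β ≤ γ) (hγ : γ < α) (x : X) (hxβ : x ∈ Xs β) (hxγ : x ∈ Xs γ),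
          sobT ρ Xs hmono hlim C hCclosed Φ P₀ hpush γ ⟨x, hxγ⟩ =
            sobT ρ Xs hmono hlim C hCclosed Φ P₀ hpush β ⟨x, hxβ⟩) ∧
        (∀ β (hβ : β < α), ‖sobT ρ Xs hmono hlim C hCclosed Φ P₀ hpush β‖ ≤ ‖P₀‖) :=
      ⟨hαρ, hcoh', hbd'⟩
    have hlimα' : Order.IsSuccLimit α := ((Ordinal.zero_or_succ_or_isSuccLimit α).resolve_left h0').resolve_left
      (by rintro ⟨β, hβ⟩; exact hs' ⟨β, by rw [Ordinal.add_one_eq_succ]; exact hβ.symm⟩)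
    have GCs := Exists.choose_spec
      (sob_glue_core Xs hmono α hlimα'.pos
        (fun β (_ : β < α) => sobT ρ Xs hmono hlim C hCclosed Φ P₀ hpush β)
        hcoh' ‖P₀‖ hbd' (ContinuousLinearMap.opNorm_nonneg P₀))
    have ECs := Exists.choose_spec
      (sob_extend_closure (hlim α hαρ hlimα')
        (sob_glue_core Xs hmono α hlimα'.pos
          (fun β (_ : β < α) => sobT ρ Xs hmono hlim C hCclosed Φ P₀ hpush β)
          hcoh' ‖P₀‖ hbd' (ContinuousLinearMap.opNorm_nonneg P₀)).choose
        ‖P₀‖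
        (sob_glue_core Xs hmono α hlimα'.pos
          (fun β (_ : β < α) => sobT ρ Xs hmono hlim C hCclosed Φ P₀ hpush β)
          hcoh' ‖P₀‖ hbd' (ContinuousLinearMap.opNorm_nonneg P₀)).choose_spec.2)
    constructor
    · rw [sobT_eq, sobStep, dif_neg h0', dif_neg hs', dif_pos hcond]
      exact ECs.2
    · intro β hβ x hxβ hxα
      rcases eq_or_lt_of_le hβ with heq | hlt
      · subst heq; rfl
      · have hXsU : Xs β ≤ ⨆ γ ∈ Set.Iio α, Xs γ :=
          le_iSup₂ (f := fun γ (_ : γ ∈ Set.Iio α) => Xs γ) β hlt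
        have hxU : x ∈ ⨆ γ ∈ Set.Iio α, Xs γ := hXsU hxβ
        have step1 := ECs.1 x hxU hxα
        have step2 := GCs.1 β hlt x hxβ hxU
        rw [sobT_eq]
        show sobStep ρ Xs hmono hlim C hCclosed Φ P₀ hpush α _ ⟨x, hxα⟩ = _
        rw [sobStep, dif_neg h0', dif_neg hs', dif_pos hcond]
        exact step1.trans step2

end SobczykRecursion

/-- **Sobczyk's theorem along pushout chains.** Let `X` be a Banach space that is the
completion of the union of a continuous transfinite chain `(X_α)_{α<ρ}` with `X₀`
separable, in which each `X_{α+1}` arises from `X_α` by a pushout along a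
finite-dimensional space (encoded by the pushout universal property). If `C ⊆ X₀` is a
closed subspace isometric to `c₀` and `P₀ : X₀ → C` is a bounded projection, then `P₀`
extends to a bounded projection `P : X → C` with `‖P‖ = ‖P₀‖`. In particular every copy
of `c₀` contained in `X₀` is complemented in `X`. -/
theorem sobczyk_pushout_chain
    {X : Type u} [NormedAddCommGroup X] [NormedSpace ℝ X] [CompleteSpace X]
    (ρ : Ordinal.{0}) (Xs : Ordinal.{0} → Subspace ℝ X)
    (hmono : ∀ α β : Ordinal, α ≤ β → Xs α ≤ Xs β)
    (hsep : TopologicalSpace.IsSeparable ((Xs 0 : Set X)))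
    (hlim : ∀ α < ρ, Order.IsSuccLimit α →
      Xs α = (⨆ β ∈ Set.Iio α, Xs β).topologicalClosure)
    (hdense : Dense (⋃ α ∈ Set.Iio ρ, (Xs α : Set X)))
    (hpush : ∀ α : Ordinal, α + 1 < ρ →
      ∃ (Fa : Subspace ℝ X) (_ : FiniteDimensional ℝ Fa)
        (hle : Fa ≤ Xs (α + 1)),
        Xs (α + 1) = Xs α ⊔ Fa ∧
        ∀ (V : Type u) [NormedAddCommGroup V] [NormedSpace ℝ V] [CompleteSpace V],
          ∀ (T : (Xs α) →L[ℝ] V) (S : Fa →L[ℝ] V),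
            (∀ (x : X) (hx : x ∈ Xs α) (hx' : x ∈ Fa), T ⟨x, hx⟩ = S ⟨x, hx'⟩) →
            ∃ h : (Xs (α + 1)) →L[ℝ] V,
              (∀ (x : X) (hx : x ∈ Xs α),
                h ⟨x, hmono α (α + 1) (le_self_add (a := α) (b := 1)) hx⟩ = T ⟨x, hx⟩) ∧
              (∀ (x : X) (hx : x ∈ Fa), h ⟨x, hle hx⟩ = S ⟨x, hx⟩) ∧
              ‖h‖ ≤ max ‖T‖ ‖S‖)
    (C : Subspace ℝ X) (hC : C ≤ Xs 0) (hCclosed : IsClosed (C : Set X))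
    (hc0 : Nonempty (C ≃ₗᵢ[ℝ] ZeroAtInftyContinuousMap ℕ ℝ))
    (P₀ : (Xs 0) →L[ℝ] C)
    (hP₀ : ∀ (x : X) (hx : x ∈ C), P₀ ⟨x, hC hx⟩ = ⟨x, hx⟩) :
    ∃ P : X →L[ℝ] C,
      (∀ (x : X) (hx : x ∈ C), P x = ⟨x, hx⟩) ∧
      (∀ x : (Xs 0), P (x : X) = P₀ x) ∧
      ‖P‖ = ‖P₀‖ := by
  classical
  haveI : CompleteSpace C := hCclosed.completeSpace_coe
  obtain ⟨Φ⟩ := hc0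
  -- ρ is positive
  have hρ0 : 0 < ρ := by
    rcases eq_or_ne ρ 0 with h | h
    · subst h
      have hempty : (⋃ α ∈ Set.Iio (0 : Ordinal.{0}), (Xs α : Set X)) = ∅ := by
        simp [Set.eq_empty_iff_forall_notMem]
      rw [hempty] at hdense
      have : (∅ : Set X).Nonempty := hdense.nonempty
      exact absurd this Set.not_nonempty_empty
    · exact pos_iff_ne_zero.mpr h
  set T := sobT ρ Xs hmono hlim C hCclosed Φ P₀ hpush with hT
  have good := sobT_good ρ Xs hmono hlim C hCclosed Φ P₀ hpush
  -- glue the family over all `α < ρ`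
  have hcoh : ∀ β γ (hβγ : β ≤ γ) (hγ : γ < ρ) (x : X) (hxβ : x ∈ Xs β) (hxγ : x ∈ Xs γ),
      T γ ⟨x, hxγ⟩ = T β ⟨x, hxβ⟩ :=
    fun β γ hβγ hγ x hxβ hxγ => (good γ hγ).2 β hβγ x hxβ hxγ
  have hbd : ∀ β (hβ : β < ρ), ‖T β‖ ≤ ‖P₀‖ := fun β hβ => (good β hβ).1
  obtain ⟨g, hg1, hg2⟩ := sob_glue_core Xs hmono ρ hρ0 (fun β _ => T β) hcoh ‖P₀‖ hbd
    (ContinuousLinearMap.opNorm_nonneg P₀)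
  -- the union is dense
  have hUdense : Dense ((⨆ β ∈ Set.Iio ρ, Xs β : Subspace ℝ X) : Set X) := by
    refine hdense.mono ?_
    intro x hx
    rw [Set.mem_iUnion₂] at hx
    obtain ⟨α, hα, hxα⟩ := hx
    exact (le_iSup₂ (f := fun γ (_ : γ ∈ Set.Iio ρ) => Xs γ) α hα) hxα
  obtain ⟨P, hP1, hP2⟩ := sob_extend_dense hUdense g ‖P₀‖ hg2
  -- P agrees with T 0 (hence with P₀) on Xs 0
  have hPzero : ∀ (x : X) (hx : x ∈ Xs 0), P x = P₀ ⟨x, hx⟩ := by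
    intro x hx
    have hxU : x ∈ (⨆ β ∈ Set.Iio ρ, Xs β : Subspace ℝ X) :=
      (le_iSup₂ (f := fun γ (_ : γ ∈ Set.Iio ρ) => Xs γ) 0 hρ0) hx
    rw [hP1 x hxU, hg1 0 hρ0 x hx hxU]
    exact sobT_zero ρ Xs hmono hlim C hCclosed Φ P₀ hpush x hx
  have hPP₀ : ∀ x : (Xs 0), P (x : X) = P₀ x := by
    intro x
    have := hPzero (x : X) x.2
    simpa using this
  refine ⟨P, ?_, hPP₀, ?_⟩
  · intro x hx
    rw [hPzero x (hC hx)]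
    exact hP₀ x hx
  · refine le_antisymm hP2 ?_
    refine ContinuousLinearMap.opNorm_le_bound _ (ContinuousLinearMap.opNorm_nonneg P)
      (fun x => ?_)
    calc ‖P₀ x‖ = ‖P (x : X)‖ := by rw [hPP₀ x]
      _ ≤ ‖P‖ * ‖(x : X)‖ := P.le_opNorm _
      _ = ‖P‖ * ‖x‖ := rfl
end

section
/- Let A be an uncountable almost disjoint family of infinite subsets of ℕ and K_A the associated Mrówka compactum (one-point compactification of the locally compact space ℕ ∪ A, where points of ℕ are isolated and basic neighborhoods of A ∈ A are {A} ∪ (A \ F) for finite F). Then the natural isometric copy of c₀ in C(K_A) (spanned by characteristic functions of singletons of ℕ) is not complemented in C(K_A). -/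
/-- The underlying set of points of the Mrówka space associated with an almost disjoint
family `𝒜` of subsets of `ℕ`: the natural numbers together with one point for each
member of `𝒜`. (A type synonym for `ℕ ⊕ ↥𝒜`, so as to carry the Mrówka topology.) -/
def MrowkaPoints (𝒜 : Set (Set ℕ)) : Type := ℕ ⊕ ↥𝒜

/-- The canonical base of the Mrówka topology: singletons of natural numbers are open,
and basic neighbourhoods of a point `A ∈ 𝒜` are `{A} ∪ (A \ F)` for `F ⊆ ℕ` finite. -/
def mrowkaBasis (𝒜 : Set (Set ℕ)) : Set (Set (MrowkaPoints 𝒜)) :=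
  {s | (∃ n : ℕ, s = {Sum.inl n}) ∨
    ∃ (A : ↥𝒜) (F : Set ℕ), F.Finite ∧
      s = insert (Sum.inr A) (Sum.inl '' ((A : Set ℕ) \ F))}

open OnePoint

section Topo

variable (𝒜 : Set (Set ℕ))

/-- Wrapper for `Sum.inl` keeping the type `MrowkaPoints 𝒜` un-unfolded. -/
def mInl (n : ℕ) : MrowkaPoints 𝒜 := Sum.inl n

/-- Wrapper for `Sum.inr` keeping the type `MrowkaPoints 𝒜` un-unfolded. -/
def mInr (A : ↥𝒜) : MrowkaPoints 𝒜 := Sum.inr A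

/-- The basic neighbourhood of `A`. -/
def mrowkaNbhd (A : ↥𝒜) (F : Set ℕ) : Set (MrowkaPoints 𝒜) :=
  insert (mInr 𝒜 A) (mInl 𝒜 '' ((A : Set ℕ) \ F))

/-- The compact clopen set `{A} ∪ A`. -/
def mrowkaSA (A : ↥𝒜) : Set (MrowkaPoints 𝒜) :=
  insert (mInr 𝒜 A) (mInl 𝒜 '' (A : Set ℕ))

lemma mInl_injective : Function.Injective (mInl 𝒜) := fun _ _ h => Sum.inl.inj h

lemma mInr_injective : Function.Injective (mInr 𝒜) := fun _ _ h => Sum.inr.inj h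

lemma mInl_ne_mInr (n : ℕ) (A : ↥𝒜) : mInl 𝒜 n ≠ mInr 𝒜 A := fun h => Sum.inl_ne_inr h

variable [τ : TopologicalSpace (MrowkaPoints 𝒜)]
  (hτ : τ = TopologicalSpace.generateFrom (mrowkaBasis 𝒜))

include hτ

lemma mrowka_isOpen_singleton (n : ℕ) : IsOpen ({mInl 𝒜 n} : Set (MrowkaPoints 𝒜)) := by
  subst hτ
  exact TopologicalSpace.GenerateOpen.basic _ (Or.inl ⟨n, rfl⟩)

lemma mrowka_isOpen_nbhd (A : ↥𝒜) (F : Set ℕ) (hF : F.Finite) :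
    IsOpen (mrowkaNbhd 𝒜 A F) := by
  subst hτ
  exact TopologicalSpace.GenerateOpen.basic _ (Or.inr ⟨A, F, hF, rfl⟩)

lemma mrowka_nbhd_basis {U : Set (MrowkaPoints 𝒜)} (hU : IsOpen U) (A : ↥𝒜)
    (hA : mInr 𝒜 A ∈ U) : ∃ F : Set ℕ, F.Finite ∧ mrowkaNbhd 𝒜 A F ⊆ U := by
  subst hτ
  have hU' : TopologicalSpace.GenerateOpen (mrowkaBasis 𝒜) U := hU
  clear hU
  revert hA
  induction hU' with
  | basic s hs =>
    intro hA
    rcases hs with ⟨n, rfl⟩ | ⟨B, F, hF, rfl⟩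
    · exact absurd hA (fun h => mInl_ne_mInr 𝒜 n A (Set.mem_singleton_iff.1 h).symm)
    · rcases hA with h | h
      · obtain rfl : A = B := Sum.inr.inj h
        exact ⟨F, hF, le_refl _⟩
      · exact absurd h (by simp [mInr])
  | univ => exact fun _ => ⟨∅, Set.finite_empty, Set.subset_univ _⟩
  | inter s t _ _ ihs iht =>
    intro hA
    obtain ⟨F₁, hF₁, h₁⟩ := ihs hA.1
    obtain ⟨F₂, hF₂, h₂⟩ := iht hA.2
    refine ⟨F₁ ∪ F₂, hF₁.union hF₂, Set.subset_inter (le_trans ?_ h₁) (le_trans ?_ h₂)⟩ <;>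
      · rintro x (rfl | ⟨m, ⟨hm, hm'⟩, rfl⟩)
        · exact Set.mem_insert _ _
        · exact Set.mem_insert_of_mem _ ⟨m, ⟨hm, fun h => hm' (by simp [h])⟩, rfl⟩
  | sUnion S _ ih =>
    intro hA
    obtain ⟨s, hs, hAs⟩ := hA
    obtain ⟨F, hF, h⟩ := ih s hs hAs
    exact ⟨F, hF, h.trans (Set.subset_sUnion_of_mem hs)⟩

lemma mrowka_isOpen_SA (A : ↥𝒜) : IsOpen (mrowkaSA 𝒜 A) := by
  have := mrowka_isOpen_nbhd 𝒜 hτ A ∅ Set.finite_empty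
  simpa [mrowkaNbhd, mrowkaSA] using this

lemma mrowka_isClosed_SA
    (had : ∀ A ∈ 𝒜, ∀ B ∈ 𝒜, A ≠ B → (A ∩ B).Finite) (A : ↥𝒜) :
    IsClosed (mrowkaSA 𝒜 A) := by
  rw [← isOpen_compl_iff]
  rw [isOpen_iff_forall_mem_open]
  intro x hx
  rcases x with n | B
  · refine ⟨{mInl 𝒜 n}, ?_, mrowka_isOpen_singleton 𝒜 hτ n, rfl⟩
    intro y hy
    rcases hy with rfl
    exact hx
  · have hBA : B ≠ A := by
      rintro rfl; exact hx (Set.mem_insert _ _)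
    refine ⟨mrowkaNbhd 𝒜 B ((A : Set ℕ) ∩ (B : Set ℕ)), ?_,
      mrowka_isOpen_nbhd 𝒜 hτ B _ (had A A.2 B B.2 ?_), Set.mem_insert _ _⟩
    · rintro y (rfl | ⟨m, ⟨hmB, hm⟩, rfl⟩)
      · rintro (h | ⟨m, _, h⟩)
        · exact hBA (mInr_injective 𝒜 h)
        · exact (mInl_ne_mInr 𝒜 m B h).elim
      · rintro (h | ⟨k, hk, h⟩)
        · exact mInl_ne_mInr 𝒜 m A h
        · obtain rfl : k = m := mInl_injective 𝒜 h
          exact hm ⟨hk, hmB⟩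
    · intro h; exact hBA (Subtype.coe_injective h.symm)

lemma mrowka_isCompact_SA (A : ↥𝒜) : IsCompact (mrowkaSA 𝒜 A) := by
  refine isCompact_of_finite_subcover fun {ι} U hUo hsU => ?_
  obtain ⟨i₀, hi₀⟩ : ∃ i, mInr 𝒜 A ∈ U i := by
    have := hsU (Set.mem_insert _ _); simpa using this
  obtain ⟨F, hF, hFsub⟩ := mrowka_nbhd_basis 𝒜 hτ (hUo i₀) A hi₀
  have hfin : ((A : Set ℕ) ∩ F).Finite := hF.inter_of_right _
  have hch : ∀ n : ℕ, n ∈ (A : Set ℕ) ∩ F → ∃ i, mInl 𝒜 n ∈ U i := by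
    intro n hn
    have : mInl 𝒜 n ∈ ⋃ i, U i :=
      hsU (Set.mem_insert_of_mem _ ⟨n, hn.1, rfl⟩)
    simpa using this
  haveI : Nonempty ι := ⟨i₀⟩
  haveI := Classical.decEq ι
  choose! g hg using hch
  refine ⟨insert i₀ (hfin.toFinset.image g), ?_⟩
  rintro x (rfl | ⟨m, hm, rfl⟩)
  · exact Set.mem_biUnion (Finset.mem_insert_self _ _) hi₀
  · by_cases hmF : m ∈ F
    · refine Set.mem_biUnion (Finset.mem_insert_of_mem ?_) (hg m ⟨hm, hmF⟩)
      exact Finset.mem_image.2 ⟨m, hfin.mem_toFinset.2 ⟨hm, hmF⟩, rfl⟩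
    · exact Set.mem_biUnion (Finset.mem_insert_self _ _)
        (hFsub (Set.mem_insert_of_mem _ ⟨m, ⟨hm, hmF⟩, rfl⟩))

lemma mrowka_mem_closure_inl (A : ↥𝒜) (hinf : (A : Set ℕ).Infinite) :
    mInr 𝒜 A ∈ closure (Set.range (mInl 𝒜)) := by
  refine mem_closure_iff.mpr fun o ho hAo => ?_
  obtain ⟨F, hF, hsub⟩ := mrowka_nbhd_basis 𝒜 hτ ho A hAo
  obtain ⟨n, hn⟩ := (hinf.diff hF).nonempty
  exact ⟨mInl 𝒜 n, hsub (Set.mem_insert_of_mem _ ⟨n, hn, rfl⟩), n, rfl⟩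

end Topo

lemma continuous_indicator_one_of_isClopen {Y : Type*} [TopologicalSpace Y] {U : Set Y}
    (h : IsClopen U) : Continuous (U.indicator (fun _ => (1 : ℝ))) :=
  ((LocallyConstant.const Y (1 : ℝ)).indicator h).continuous

lemma clamp_eq_self {v : ℝ} (h : |v| ≤ 1) : max (min v 1) (-1) = v := by
  rw [min_eq_left (abs_le.1 h).2, max_eq_left (abs_le.1 h).1]

lemma countable_of_sum_abs_le {α : Type*} (v : α → ℝ) (C : ℝ)
    (h : ∀ t : Finset α, ∑ a ∈ t, |v a| ≤ C) : {a | v a ≠ 0}.Countable := by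
  have hfin : ∀ k : ℕ, {a | 1 / (k + 1 : ℝ) ≤ |v a|}.Finite := by
    intro k
    rw [← Set.not_infinite]
    intro hinfin
    obtain ⟨K, hK⟩ := exists_nat_gt (C * (k + 1))
    obtain ⟨t, hts, hcard⟩ := hinfin.exists_subset_card_eq K
    have h1 : (K : ℝ) * (1 / (k + 1)) ≤ ∑ a ∈ t, |v a| := by
      rw [← hcard]
      have := Finset.card_nsmul_le_sum t (fun a => |v a|) (1 / (k + 1 : ℝ))
        (fun a ha => hts ha)
      simpa [nsmul_eq_mul] using this
    have hk1 : (0 : ℝ) < k + 1 := by positivity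
    have h2 : C < (K : ℝ) * (1 / (k + 1)) := by
      rw [mul_one_div, lt_div_iff₀ hk1]
      exact hK
    exact absurd (h1.trans (h t)) (not_le.2 h2)
  have hsub : {a | v a ≠ 0} ⊆ ⋃ k : ℕ, {a | 1 / (k + 1 : ℝ) ≤ |v a|} := by
    intro a ha
    obtain ⟨k, hk⟩ := exists_nat_one_div_lt (abs_pos.2 ha)
    exact Set.mem_iUnion.2 ⟨k, hk.le⟩
  exact Set.Countable.mono hsub (Set.countable_iUnion fun k => (hfin k).countable)


/-- **The copy of `c₀` in `C(K_𝒜)` is not complemented.** Let `𝒜` be an uncountable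
almost disjoint family of infinite subsets of `ℕ` and let `K_𝒜` be the Mrówka compactum,
the one-point compactification of `ℕ ∪ 𝒜` with the Mrówka topology. Then the natural
isometric copy of `c₀` inside `C(K_𝒜)` — the continuous functions vanishing at every
point not in `ℕ` — is not the range of a bounded linear projection. -/
theorem mrowka_c0_not_complemented
    (𝒜 : Set (Set ℕ))
    (hinf : ∀ A ∈ 𝒜, A.Infinite)
    (had : ∀ A ∈ 𝒜, ∀ B ∈ 𝒜, A ≠ B → (A ∩ B).Finite)
    (hunc : ¬ 𝒜.Countable)
    [τ : TopologicalSpace (MrowkaPoints 𝒜)]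
    (hτ : τ = TopologicalSpace.generateFrom (mrowkaBasis 𝒜)) :
    ¬ ∃ P : C(OnePoint (MrowkaPoints 𝒜), ℝ) →L[ℝ] C(OnePoint (MrowkaPoints 𝒜), ℝ),
        (∀ f : C(OnePoint (MrowkaPoints 𝒜), ℝ),
          ∀ p : OnePoint (MrowkaPoints 𝒜),
            (∀ n : ℕ, p ≠ OnePoint.some (Sum.inl n)) → P f p = 0) ∧
        (∀ f : C(OnePoint (MrowkaPoints 𝒜), ℝ),
          (∀ p : OnePoint (MrowkaPoints 𝒜),
            (∀ n : ℕ, p ≠ OnePoint.some (Sum.inl n)) → f p = 0) → P f = f) := by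
  classical
  rintro ⟨P, hP1, hP2⟩
  -- the clopen sets and their indicator functions
  have hclopen : ∀ A : ↥𝒜,
      IsClopen (OnePoint.some '' mrowkaSA 𝒜 A : Set (OnePoint (MrowkaPoints 𝒜))) := fun A =>
    ⟨OnePoint.isClosed_image_coe.2
        ⟨mrowka_isClosed_SA 𝒜 hτ had A, mrowka_isCompact_SA 𝒜 hτ A⟩,
      OnePoint.isOpen_image_coe.2 (mrowka_isOpen_SA 𝒜 hτ A)⟩
  set f : ↥𝒜 → C(OnePoint (MrowkaPoints 𝒜), ℝ) := fun A =>
    ⟨Set.indicator (OnePoint.some '' mrowkaSA 𝒜 A) (fun _ => 1),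
      continuous_indicator_one_of_isClopen (hclopen A)⟩ with hf
  -- values of f
  have hf_inl : ∀ (A : ↥𝒜) (n : ℕ),
      f A (OnePoint.some (mInl 𝒜 n)) = if n ∈ (A : Set ℕ) then 1 else 0 := by
    intro A n
    by_cases hn : n ∈ (A : Set ℕ)
    · rw [if_pos hn]
      show Set.indicator (OnePoint.some '' mrowkaSA 𝒜 A) (fun _ => (1 : ℝ))
        (OnePoint.some (mInl 𝒜 n)) = 1
      have hmem : OnePoint.some (mInl 𝒜 n) ∈ OnePoint.some '' mrowkaSA 𝒜 A :=
        ⟨mInl 𝒜 n, Set.mem_insert_of_mem _ ⟨n, hn, rfl⟩, rfl⟩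
      exact Set.indicator_of_mem hmem _
    · rw [if_neg hn]
      show Set.indicator (OnePoint.some '' mrowkaSA 𝒜 A) (fun _ => (1 : ℝ))
        (OnePoint.some (mInl 𝒜 n)) = 0
      refine Set.indicator_of_notMem ?_ _
      rintro ⟨x, hx, hx'⟩
      obtain rfl : x = mInl 𝒜 n := OnePoint.coe_injective hx'
      rcases hx with h | ⟨m, hm, h⟩
      · exact mInl_ne_mInr 𝒜 n A h
      · obtain rfl : m = n := mInl_injective 𝒜 h
        exact hn hm
  have hf_inr : ∀ (A B : ↥𝒜),
      f A (OnePoint.some (mInr 𝒜 B)) = if A = B then 1 else 0 := by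
    intro A B
    by_cases hAB : A = B
    · subst hAB
      rw [if_pos rfl]
      show Set.indicator (OnePoint.some '' mrowkaSA 𝒜 A) (fun _ => (1 : ℝ))
        (OnePoint.some (mInr 𝒜 A)) = 1
      have hmem : OnePoint.some (mInr 𝒜 A) ∈ OnePoint.some '' mrowkaSA 𝒜 A :=
        ⟨mInr 𝒜 A, Set.mem_insert _ _, rfl⟩
      exact Set.indicator_of_mem hmem _
    · rw [if_neg hAB]
      show Set.indicator (OnePoint.some '' mrowkaSA 𝒜 A) (fun _ => (1 : ℝ))
        (OnePoint.some (mInr 𝒜 B)) = 0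
      refine Set.indicator_of_notMem ?_ _
      rintro ⟨x, hx, hx'⟩
      obtain rfl : x = mInr 𝒜 B := OnePoint.coe_injective hx'
      rcases hx with h | ⟨m, _, h⟩
      · exact hAB (mInr_injective 𝒜 h).symm
      · exact mInl_ne_mInr 𝒜 m B h
  have hf_infty : ∀ A : ↥𝒜, f A ∞ = 0 := by
    intro A
    show Set.indicator (OnePoint.some '' mrowkaSA 𝒜 A) (fun _ => (1 : ℝ)) ∞ = 0
    exact Set.indicator_of_notMem OnePoint.infty_notMem_image_coe _
  -- the point evaluations
  set x₀ : ℕ → OnePoint (MrowkaPoints 𝒜) := fun n => OnePoint.some (mInl 𝒜 n) with hx₀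
  set q : ℕ → C(OnePoint (MrowkaPoints 𝒜), ℝ) → ℝ :=
    fun n u => u (x₀ n) - P u (x₀ n) with hq
  -- key finite bound
  have key : ∀ (n : ℕ) (t : Finset ↥𝒜), ∑ A ∈ t, |q n (f A)| ≤ 1 + ‖P‖ := by
    intro n t
    set s : ↥𝒜 → ℝ := fun A => if 0 ≤ q n (f A) then 1 else -1 with hs
    have hs_abs : ∀ A, |s A| ≤ 1 := by
      intro A; rw [hs]; dsimp only; split <;> norm_num
    set g : C(OnePoint (MrowkaPoints 𝒜), ℝ) := ∑ A ∈ t, s A • f A with hg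
    have hg_apply : ∀ x, g x = ∑ A ∈ t, s A * f A x := by
      intro x
      rw [hg]
      simp
    set h : C(OnePoint (MrowkaPoints 𝒜), ℝ) :=
      ⟨fun x => max (min (g x) 1) (-1),
        ((map_continuous g).min continuous_const).max continuous_const⟩ with hh
    have hh_apply : ∀ x, h x = max (min (g x) 1) (-1) := fun x => rfl
    have hh_abs : ∀ x, |h x| ≤ 1 := by
      intro x
      rw [hh_apply, abs_le]
      constructor
      · exact le_max_right _ _
      · exact max_le (min_le_right _ _) (by norm_num)
    -- g is small off ℕ
    have hg_small : ∀ p : OnePoint (MrowkaPoints 𝒜),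
        (∀ m : ℕ, p ≠ OnePoint.some (mInl 𝒜 m)) → |g p| ≤ 1 := by
      intro p hp
      induction p using OnePoint.rec with
      | infty =>
        rw [hg_apply]
        have : ∀ A ∈ t, s A * f A (∞ : OnePoint (MrowkaPoints 𝒜)) = 0 := by
          intro A _
          rw [hf_infty A, mul_zero]
        rw [Finset.sum_congr rfl this, Finset.sum_const_zero]
        norm_num
      | coe x =>
        rcases x with m | B
        · exact absurd rfl (hp m)
        · show |g (OnePoint.some (mInr 𝒜 B))| ≤ 1
          rw [hg_apply]
          have heach : ∀ A ∈ t, s A * f A (OnePoint.some (mInr 𝒜 B)) =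
              if A = B then s A else 0 := by
            intro A _
            rw [hf_inr A B, mul_ite, mul_one, mul_zero]
          rw [Finset.sum_congr rfl heach, Finset.sum_ite_eq' t B s]
          split
          · exact hs_abs B
          · norm_num
    -- r vanishes off ℕ
    set r : C(OnePoint (MrowkaPoints 𝒜), ℝ) := g - h with hr
    have hr_vanish : ∀ p : OnePoint (MrowkaPoints 𝒜),
        (∀ m : ℕ, p ≠ OnePoint.some (Sum.inl m)) → r p = 0 := by
      intro p hp
      have hp' : ∀ m : ℕ, p ≠ OnePoint.some (mInl 𝒜 m) := hp
      have := hg_small p hp'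
      rw [hr, ContinuousMap.sub_apply, hh_apply, clamp_eq_self this, sub_self]
    have hPr : P r = r := hP2 r hr_vanish
    have hqr : q n r = 0 := by rw [hq]; dsimp only; rw [hPr, sub_self]
    have hgh : q n g = q n h := by
      have hghr : g = h + r := by rw [hr]; ring
      rw [hq] at hqr ⊢
      dsimp only at hqr ⊢
      rw [hghr, map_add, ContinuousMap.add_apply, ContinuousMap.add_apply]
      have : r (x₀ n) - (P r) (x₀ n) = 0 := hqr
      linarith
    have hsum : ∑ A ∈ t, |q n (f A)| = q n g := by
      have habs : ∀ A ∈ t, |q n (f A)| = s A * q n (f A) := by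
        intro A _
        rw [hs]
        dsimp only
        split_ifs with hpos
        · rw [one_mul, abs_of_nonneg hpos]
        · rw [neg_one_mul, abs_of_neg (lt_of_not_ge hpos)]
      rw [Finset.sum_congr rfl habs]
      have hPg : P g = ∑ A ∈ t, s A • P (f A) := by
        rw [hg, map_sum]
        exact Finset.sum_congr rfl fun A _ => P.map_smul _ _
      rw [hq]
      dsimp only
      rw [hg_apply, hPg]
      rw [ContinuousMap.coe_sum, Finset.sum_apply]
      simp only [ContinuousMap.coe_smul, Pi.smul_apply, smul_eq_mul]
      rw [← Finset.sum_sub_distrib]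
      refine Finset.sum_congr rfl fun A _ => ?_
      show s A * q n (f A) = _
      rw [hq]
      dsimp only
      ring
    rw [hsum, hgh]
    have h1 : ‖h‖ ≤ 1 := by
      rw [ContinuousMap.norm_le _ zero_le_one]
      intro x
      rw [Real.norm_eq_abs]
      exact hh_abs x
    have h2 : |h (x₀ n)| ≤ 1 := hh_abs _
    have h3 : |(P h) (x₀ n)| ≤ ‖P‖ := by
      calc |(P h) (x₀ n)| ≤ ‖P h‖ := by
            rw [← Real.norm_eq_abs]; exact (P h).norm_coe_le_norm _
        _ ≤ ‖P‖ * ‖h‖ := P.le_opNorm h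
        _ ≤ ‖P‖ * 1 := by
            exact mul_le_mul_of_nonneg_left h1 (norm_nonneg P)
        _ = ‖P‖ := mul_one _
    calc q n h ≤ |q n h| := le_abs_self _
      _ = |h (x₀ n) - (P h) (x₀ n)| := rfl
      _ ≤ |h (x₀ n)| + |(P h) (x₀ n)| := abs_sub _ _
      _ ≤ 1 + ‖P‖ := add_le_add h2 h3
  -- countability
  have hcnt : ∀ n : ℕ, {A : ↥𝒜 | q n (f A) ≠ 0}.Countable := fun n =>
    countable_of_sum_abs_le _ _ (key n)
  have hD : (⋃ n : ℕ, {A : ↥𝒜 | q n (f A) ≠ 0}).Countable :=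
    Set.countable_iUnion hcnt
  have hex : ∃ A : ↥𝒜, ∀ n : ℕ, q n (f A) = 0 := by
    by_contra hcon
    push_neg at hcon
    have huniv : (Set.univ : Set ↥𝒜) ⊆ ⋃ n : ℕ, {A : ↥𝒜 | q n (f A) ≠ 0} := by
      intro A _
      obtain ⟨n, hn⟩ := hcon A
      exact Set.mem_iUnion.2 ⟨n, hn⟩
    have : (Set.univ : Set ↥𝒜).Countable := hD.mono huniv
    have : Countable ↥𝒜 := Set.countable_univ_iff.1 this
    exact hunc (Set.countable_coe_iff.1 this)
  obtain ⟨A, hA⟩ := hex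
  set u : C(OnePoint (MrowkaPoints 𝒜), ℝ) := f A - P (f A) with hu
  have hu_inl : ∀ n : ℕ, u (x₀ n) = 0 := by
    intro n
    have := hA n
    rw [hq] at this
    dsimp only at this
    rw [hu, ContinuousMap.sub_apply]
    exact this
  have hZ : IsClosed {x : OnePoint (MrowkaPoints 𝒜) | u x = 0} :=
    isClosed_eq (map_continuous u) continuous_const
  have hsub : OnePoint.some '' Set.range (mInl 𝒜) ⊆
      {x : OnePoint (MrowkaPoints 𝒜) | u x = 0} := by
    rintro _ ⟨_, ⟨n, rfl⟩, rfl⟩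
    exact hu_inl n
  have hmem : OnePoint.some (mInr 𝒜 A) ∈
      closure (OnePoint.some '' Set.range (mInl 𝒜) : Set (OnePoint (MrowkaPoints 𝒜))) := by
    have h1 : mInr 𝒜 A ∈ closure (Set.range (mInl 𝒜)) :=
      mrowka_mem_closure_inl 𝒜 hτ A (hinf A A.2)
    exact (image_closure_subset_closure_image OnePoint.continuous_coe) ⟨_, h1, rfl⟩
  have hzero : u (OnePoint.some (mInr 𝒜 A)) = 0 :=
    hZ.closure_subset ((closure_mono hsub) hmem)
  have hone : u (OnePoint.some (mInr 𝒜 A)) = 1 := by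
    rw [hu, ContinuousMap.sub_apply]
    have hP0 : P (f A) (OnePoint.some (mInr 𝒜 A)) = 0 := by
      refine hP1 (f A) _ fun n hEq => ?_
      exact mInl_ne_mInr 𝒜 n A (OnePoint.coe_injective hEq).symm
    rw [hP0, hf_inr A A, if_pos rfl, sub_zero]
  rw [hzero] at hone
  exact zero_ne_one hone
end
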